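/- For x = (x¹,...,x^d) ∈ (P_n)^d with formal polynomial G(x;q) := ∑_{i=1}^{d-1} ∑_{j=1}^{n} ΔX^{(i)}_j · q^{wt(i)}, the derivative at q = 1 recovers the EMD: G'(x;1) = ∑_{j=1}^n ∑_{i=1}^{d-1} wt(i)·ΔX^{(i)}_j = EMD(x). -/

import Mathlib

open Finset

/-- `C(y) = min_{a ∈ ℝ} ∑ |yᵢ - a|` (the infimum is attained). -/
noncomputable def Cmin {d : ℕ} (y : Fin d → ℝ) : ℝ :=
  sInf (Set.range fun a : ℝ => ∑ i, |y i - a|)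

/-- The cumulative sum `X_j = x₁ + ⋯ + x_j` of `x ∈ ℝ^{n+1}`. -/
noncomputable def cdf {n : ℕ} (x : Fin (n + 1) → ℝ) (j : ℕ) : ℝ :=
  ∑ k : Fin (n + 1), if (k : ℕ) < j then x k else 0

/-- The `i`-th smallest component (0-indexed) of the tuple `y`. -/
noncomputable def sortedNth {d : ℕ} (y : Fin d → ℝ) (i : ℕ) : ℝ :=
  if h : i < d then y (Tuple.sort y ⟨i, h⟩) else 0

lemma sorted_mono {d : ℕ} (y : Fin d → ℝ) {a b : ℕ} (hab : a ≤ b) (hb : b < d) :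
    sortedNth y a ≤ sortedNth y b := by
  have ha : a < d := lt_of_le_of_lt hab hb
  simp only [sortedNth, dif_pos ha, dif_pos hb]
  exact Tuple.monotone_sort y (show (⟨a, ha⟩ : Fin d) ≤ ⟨b, hb⟩ from hab)

lemma telescope {d : ℕ} (y : Fin d → ℝ) (a b : ℕ) (hab : a ≤ b) :
    ∑ k ∈ Ico a b, (sortedNth y (k+1) - sortedNth y k)
      = sortedNth y b - sortedNth y a := by
  induction b, hab using Nat.le_induction with
  | base => simp
  | succ b hab ih => rw [Finset.sum_Ico_succ_top hab, ih]; ring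

lemma key {d : ℕ} (hd : 1 ≤ d) (y : Fin d → ℝ) :
    ∑ i ∈ Ico 1 d, (min i (d - i) : ℝ) * (sortedNth y i - sortedNth y (i - 1))
      = Cmin y := by
  -- convert coefficients to casts of natural numbers
  have hcoe : ∀ i ∈ Ico 1 d, (min i (d - i) : ℝ) * (sortedNth y i - sortedNth y (i - 1))
      = ((min i (d - i) : ℕ) : ℝ) * (sortedNth y i - sortedNth y (i - 1)) := by
    intro i hi
    simp only [Finset.mem_Ico] at hi
    congr 1
    rw [Nat.cast_min, Nat.cast_sub (le_of_lt hi.2)]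
  rw [Finset.sum_congr rfl hcoe]
  set s : ℕ → ℝ := sortedNth y with hs
  obtain ⟨h, e, hhe, heh, hle, hhd⟩ :
      ∃ h e : ℕ, h ≤ e ∧ e + h = d ∧ e ≤ h + 1 ∧ h < d :=
    ⟨d / 2, d - d / 2, by omega, by omega, by omega, by omega⟩
  set m := s h with hm
  set V : ℝ := ∑ i ∈ range h, (s (d - 1 - i) - s i) with hV
  have h1 : ∀ a : ℝ, ∑ i ∈ range h, |s (d - 1 - i) - a| = ∑ i ∈ Ico e d, |s i - a| := by
    intro a
    refine Finset.sum_nbij' (fun i => d - 1 - i) (fun i => d - 1 - i) ?_ ?_ ?_ ?_ ?_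
    · intro i hi; simp only [Finset.mem_range] at hi; simp only [Finset.mem_Ico]; omega
    · intro i hi; simp only [Finset.mem_Ico] at hi; simp only [Finset.mem_range]; omega
    · intro i hi; simp only [Finset.mem_range] at hi
      show d - 1 - (d - 1 - i) = i; omega
    · intro i hi; simp only [Finset.mem_Ico] at hi
      show d - 1 - (d - 1 - i) = i; omega
    · intro i _; rfl
  have decomp : ∀ a : ℝ, ∑ i ∈ range d, |s i - a|
      = ∑ i ∈ range h, |s i - a| + ∑ i ∈ range h, |s (d - 1 - i) - a|
        + ∑ i ∈ Ico h e, |s i - a| := by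
    intro a
    have e1 : ∑ i ∈ Ico 0 h, |s i - a| + ∑ i ∈ Ico h e, |s i - a|
        = ∑ i ∈ Ico 0 e, |s i - a| :=
      Finset.sum_Ico_consecutive _ (Nat.zero_le h) hhe
    have e2 : ∑ i ∈ Ico 0 e, |s i - a| + ∑ i ∈ Ico e d, |s i - a|
        = ∑ i ∈ Ico 0 d, |s i - a| :=
      Finset.sum_Ico_consecutive _ (Nat.zero_le e) (by omega : e ≤ d)
    rw [h1 a]
    simp only [Finset.range_eq_Ico]
    linarith
  have hmid : ∑ i ∈ Ico h e, |s i - m| = 0 := by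
    apply Finset.sum_eq_zero
    intro i hi
    simp only [Finset.mem_Ico] at hi
    have : i = h := by omega
    simp [this, hm]
  have hfm : ∑ i ∈ range d, |s i - m| = V := by
    rw [decomp, hmid, add_zero, hV, ← Finset.sum_add_distrib]
    apply Finset.sum_congr rfl
    intro i hi
    simp only [Finset.mem_range] at hi
    have h1 : s i ≤ m := sorted_mono y (by omega) hhd
    have h2 : m ≤ s (d - 1 - i) := sorted_mono y (by omega) (by omega)
    rw [abs_of_nonpos (by linarith), abs_of_nonneg (by linarith)]
    ring
  have hlb : ∀ a : ℝ, V ≤ ∑ i ∈ range d, |s i - a| := by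
    intro a
    rw [decomp]
    have h2 : V ≤ ∑ i ∈ range h, |s i - a| + ∑ i ∈ range h, |s (d - 1 - i) - a| := by
      rw [← Finset.sum_add_distrib, hV]
      apply Finset.sum_le_sum
      intro i _
      have := le_abs_self (s (d - 1 - i) - a)
      have := neg_abs_le (s i - a)
      linarith
    have h3 : (0:ℝ) ≤ ∑ i ∈ Ico h e, |s i - a| :=
      Finset.sum_nonneg fun i _ => abs_nonneg _
    linarith
  have hCmin : Cmin y = V := by
    have hfun : ∀ a : ℝ, ∑ i : Fin d, |y i - a| = ∑ i ∈ range d, |s i - a| := by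
      intro a
      rw [← Equiv.sum_comp (Tuple.sort y) (fun i => |y i - a|),
        ← Fin.sum_univ_eq_sum_range]
      apply Finset.sum_congr rfl
      intro i _
      simp [hs, sortedNth, i.isLt]
    have hleast : IsLeast (Set.range fun a : ℝ => ∑ i, |y i - a|) V := by
      constructor
      · refine ⟨m, ?_⟩
        show (∑ i : Fin d, |y i - m|) = V
        rw [hfun m]; exact hfm
      · rintro v ⟨a, rfl⟩
        calc V ≤ ∑ i ∈ range d, |s i - a| := hlb a
          _ = ∑ i : Fin d, |y i - a| := (hfun a).symm
    rw [Cmin, hleast.csInf_eq]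
  rw [hCmin]
  have hVtel : V = ∑ i ∈ range h, ∑ k ∈ Ico i (d - 1 - i), (s (k+1) - s k) := by
    rw [hV]
    apply Finset.sum_congr rfl
    intro i hi
    simp only [Finset.mem_range] at hi
    rw [telescope y i (d - 1 - i) (by omega)]
  rw [hVtel]
  have hswap : ∑ i ∈ range h, ∑ k ∈ Ico i (d - 1 - i), (s (k+1) - s k)
      = ∑ k ∈ range (d - 1), ((min (k+1) (d - 1 - k) : ℕ) : ℝ) * (s (k+1) - s k) := by
    have step : ∀ i ∈ range h, ∑ k ∈ Ico i (d - 1 - i), (s (k+1) - s k)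
        = ∑ k ∈ range (d - 1), if k ∈ Ico i (d - 1 - i) then s (k+1) - s k else 0 := by
      intro i hi
      simp only [Finset.mem_range] at hi
      rw [Finset.sum_ite_mem]
      have hsub : range (d - 1) ∩ Ico i (d - 1 - i) = Ico i (d - 1 - i) := by
        apply Finset.inter_eq_right.mpr
        intro k hk
        simp only [Finset.mem_Ico] at hk
        simp only [Finset.mem_range]
        omega
      rw [hsub]
    rw [Finset.sum_congr rfl step, Finset.sum_comm]
    apply Finset.sum_congr rfl
    intro k hk
    simp only [Finset.mem_range] at hk
    have hfilter : (range h).filter (fun i => k ∈ Ico i (d - 1 - i))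
        = range (min (k+1) (d - 1 - k)) := by
      ext i
      simp only [Finset.mem_filter, Finset.mem_range, Finset.mem_Ico, lt_min_iff]
      omega
    rw [← Finset.sum_filter, hfilter, Finset.sum_const, Finset.card_range, nsmul_eq_mul]
  rw [hswap, Finset.sum_Ico_eq_sum_range]
  apply Finset.sum_congr rfl
  intro k hk
  simp only [Finset.mem_range] at hk
  have h3 : 1 + k - 1 = k := by omega
  have h2 : d - (1 + k) = d - 1 - k := by omega
  have h1' : 1 + k = k + 1 := by omega
  rw [h3, h2, h1']

/-- For `G(x;q) = ∑_{i=1}^{d-1} ∑_{j=1}^{n} ΔX^{(i)}_j q^{wt(i)}`, the derivative at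
`q = 1` equals `∑_j ∑_i wt(i) ΔX^{(i)}_j`, which is `EMD(x) = ∑_j C(X¹_j, …, X^d_j)`.
Here `ΔX^{(i)}_j` (paper's 1-indexed `i`) is `sortedNth _ i - sortedNth _ (i-1)`. -/
theorem stmt12 (n d : ℕ) (hn : 1 ≤ n) (hd : 2 ≤ d) (x : Fin d → Fin (n + 1) → ℝ)
    (hx : ∀ i, (∀ k, 0 ≤ x i k) ∧ ∑ k, x i k = 1)
    (G : Polynomial ℝ)
    (hG : G = ∑ i ∈ Finset.Ico 1 d, ∑ j ∈ Finset.Icc 1 n,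
        Polynomial.C (sortedNth (fun i' => cdf (x i') j) i
            - sortedNth (fun i' => cdf (x i') j) (i - 1))
          * Polynomial.X ^ (min i (d - i))) :
    Polynomial.eval 1 (Polynomial.derivative G)
        = ∑ j ∈ Finset.Icc 1 n, ∑ i ∈ Finset.Ico 1 d, (min i (d - i) : ℝ)
            * (sortedNth (fun i' => cdf (x i') j) i
                - sortedNth (fun i' => cdf (x i') j) (i - 1))
      ∧ Polynomial.eval 1 (Polynomial.derivative G)
        = ∑ j ∈ Finset.Icc 1 n, Cmin (fun i => cdf (x i) j) := by
  have hG1 : Polynomial.eval 1 (Polynomial.derivative G)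
      = ∑ j ∈ Finset.Icc 1 n, ∑ i ∈ Finset.Ico 1 d, (min i (d - i) : ℝ)
          * (sortedNth (fun i' => cdf (x i') j) i
              - sortedNth (fun i' => cdf (x i') j) (i - 1)) := by
    subst hG
    simp only [map_sum, Polynomial.derivative_mul, Polynomial.derivative_C, zero_mul,
      zero_add, Polynomial.derivative_X_pow, Polynomial.eval_finset_sum, Polynomial.eval_mul,
      Polynomial.eval_pow, Polynomial.eval_C, Polynomial.eval_natCast, Polynomial.eval_X,
      one_pow, mul_one]
    rw [Finset.sum_comm]
    refine Finset.sum_congr rfl fun j _ => Finset.sum_congr rfl fun i hi => ?_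
    simp only [Finset.mem_Ico] at hi
    have hcast : ((i ⊓ (d - i) : ℕ) : ℝ) = (i : ℝ) ⊓ ((d : ℝ) - (i : ℝ)) := by
      rw [Nat.cast_min, Nat.cast_sub (le_of_lt hi.2)]
    rw [← hcast]
    ring
  exact ⟨hG1, hG1.trans (Finset.sum_congr rfl fun j _ => key (by omega) _)⟩
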